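/- Let M₁ be the 4-qubit operator M₁ = (1/2)·I⊗I⊗I⊗I + (1/18)·(IXIX + XIXI + XXXX + ZIZI + IZIZ + ZZZZ + XZXZ + ZXZX + YYYY), where X, Y, Z are the Pauli matrices and each 4-letter word denotes the corresponding tensor product of single-qubit operators. Then the largest eigenvalue of M₁ is 1, achieved uniquely (up to phase) by the state |EPR⟩^{⊗2} = ((|00⟩+|11⟩)/√2)^{⊗2} (with tensor factors ordered so that qubits 1,3 form one EPR pair and qubits 2,4 the other), and every other eigenvalue of M₁ has absolute value at most 5/9. -/

import Mathlib

open Matrix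
open scoped BigOperators

noncomputable section

/-- Pauli X on ℂ², indexed by `ZMod 2`. -/
def pX : Matrix (ZMod 2) (ZMod 2) ℂ := fun i j => if i = j then 0 else 1

/-- Pauli Z on ℂ², indexed by `ZMod 2`. -/
def pZ : Matrix (ZMod 2) (ZMod 2) ℂ := fun i j => if i = j then (if i = 0 then 1 else -1) else 0

/-- Pauli Y on ℂ², indexed by `ZMod 2`. -/
def pY : Matrix (ZMod 2) (ZMod 2) ℂ :=
  fun i j => if i = 0 ∧ j = 1 then -Complex.I else if i = 1 ∧ j = 0 then Complex.I else 0

/-- Index set for four qubits. -/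
abbrev Q4 := ZMod 2 × ZMod 2 × ZMod 2 × ZMod 2

/-- Tensor product `A ⊗ B ⊗ C ⊗ D` of four single-qubit operators. -/
def word4 (A B C D : Matrix (ZMod 2) (ZMod 2) ℂ) : Matrix Q4 Q4 ℂ :=
  fun p q => A p.1 q.1 * B p.2.1 q.2.1 * C p.2.2.1 q.2.2.1 * D p.2.2.2 q.2.2.2

/-- The 4-qubit operator
`M₁ = (1/2)·IIII + (1/18)(IXIX + XIXI + XXXX + ZIZI + IZIZ + ZZZZ + XZXZ + ZXZX + YYYY)`. -/
def M1 : Matrix Q4 Q4 ℂ :=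
  (1 / 2 : ℂ) • (1 : Matrix Q4 Q4 ℂ) +
    (1 / 18 : ℂ) •
      (word4 1 pX 1 pX + word4 pX 1 pX 1 + word4 pX pX pX pX +
        word4 pZ 1 pZ 1 + word4 1 pZ 1 pZ + word4 pZ pZ pZ pZ +
        word4 pX pZ pX pZ + word4 pZ pX pZ pX + word4 pY pY pY pY)

/-- The state `|EPR⟩^{⊗2}` on four qubits, EPR pairs on qubits (1,3) and (2,4):
amplitude `1/2` when qubit 1 = qubit 3 and qubit 2 = qubit 4. -/
def eprV : Q4 → ℂ := fun q => if q.1 = q.2.2.1 ∧ q.2.1 = q.2.2.2 then (1 / 2 : ℂ) else 0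

/-! ### Integer avatars -/

/-- Integer Pauli X. -/
def Xz : Matrix (ZMod 2) (ZMod 2) ℤ := fun i j => if i = j then 0 else 1

/-- Integer Pauli Z. -/
def Zz : Matrix (ZMod 2) (ZMod 2) ℤ := fun i j => if i = j then (if i = 0 then 1 else -1) else 0

/-- Integer avatar of Pauli Y (Y = i · Yz). -/
def Yz : Matrix (ZMod 2) (ZMod 2) ℤ :=
  fun i j => if i = 0 ∧ j = 1 then -1 else if i = 1 ∧ j = 0 then 1 else 0

/-- Integer 4-fold tensor word. -/
def word4z (A B C D : Matrix (ZMod 2) (ZMod 2) ℤ) : Matrix Q4 Q4 ℤ :=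
  fun p q => A p.1 q.1 * B p.2.1 q.2.1 * C p.2.2.1 q.2.2.1 * D p.2.2.2 q.2.2.2

/-- The integer matrix `N = 18 · M₁`. -/
def Nz : Matrix Q4 Q4 ℤ :=
  (9 : ℤ) • (1 : Matrix Q4 Q4 ℤ) +
    (word4z 1 Xz 1 Xz + word4z Xz 1 Xz 1 + word4z Xz Xz Xz Xz +
      word4z Zz 1 Zz 1 + word4z 1 Zz 1 Zz + word4z Zz Zz Zz Zz +
      word4z Xz Zz Xz Zz + word4z Zz Xz Zz Xz + word4z Yz Yz Yz Yz)

/-- The integer vector `2 · eprV`. -/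
def e4 : Q4 → ℤ := fun q => if q.1 = q.2.2.1 ∧ q.2.1 = q.2.2.2 then 1 else 0

lemma word4_map (A B C D : Matrix (ZMod 2) (ZMod 2) ℤ) :
    (word4z A B C D).map (Int.cast : ℤ → ℂ) =
      word4 (A.map Int.cast) (B.map Int.cast) (C.map Int.cast) (D.map Int.cast) := by
  ext p q
  simp [word4, word4z, Matrix.map_apply]

lemma word4_smul (a : ℂ) (A B C D : Matrix (ZMod 2) (ZMod 2) ℂ) :
    word4 (a • A) (a • B) (a • C) (a • D) = (a ^ 4) • word4 A B C D := by
  ext p q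
  simp only [word4, Matrix.smul_apply, smul_eq_mul]
  ring

lemma pX_eq : pX = Xz.map (Int.cast : ℤ → ℂ) := by
  ext i j; simp [pX, Xz, Matrix.map_apply, apply_ite (Int.cast : ℤ → ℂ)]

lemma pZ_eq : pZ = Zz.map (Int.cast : ℤ → ℂ) := by
  ext i j; simp [pZ, Zz, Matrix.map_apply, apply_ite (Int.cast : ℤ → ℂ)]

lemma pY_eq : pY = Complex.I • (Yz.map (Int.cast : ℤ → ℂ)) := by
  ext i j
  simp only [pY, Yz, Matrix.smul_apply, Matrix.map_apply, smul_eq_mul]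
  split_ifs <;> simp

lemma one_map2 : ((1 : Matrix (ZMod 2) (ZMod 2) ℤ).map (Int.cast : ℤ → ℂ)) = 1 :=
  Matrix.map_one _ Int.cast_zero Int.cast_one

lemma one_map4 : ((1 : Matrix Q4 Q4 ℤ).map (Int.cast : ℤ → ℂ)) = 1 :=
  Matrix.map_one _ Int.cast_zero Int.cast_one

/-- Entrywise integer-cast as a ring hom on 4-qubit matrices. -/
def φ : Matrix Q4 Q4 ℤ →+* Matrix Q4 Q4 ℂ := (Int.castRingHom ℂ).mapMatrix

lemma φ_apply (A : Matrix Q4 Q4 ℤ) : φ A = A.map (Int.cast : ℤ → ℂ) := rfl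

lemma smul_one_map (a : ℤ) :
    ((a : ℤ) • (1 : Matrix Q4 Q4 ℤ)).map (Int.cast : ℤ → ℂ) =
      ((a : ℂ)) • (1 : Matrix Q4 Q4 ℂ) := by
  ext p q
  simp only [Matrix.map_apply, Matrix.smul_apply, Matrix.one_apply, smul_eq_mul,
    mul_ite, mul_one, mul_zero]
  split_ifs <;> simp

/-- `N` maps to `18 · M₁`. -/
lemma Nz_map : Nz.map (Int.cast : ℤ → ℂ) = (18 : ℂ) • M1 := by
  have hY : (word4z Yz Yz Yz Yz).map (Int.cast : ℤ → ℂ) = word4 pY pY pY pY := by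
    rw [word4_map, pY_eq, word4_smul]
    norm_num [Complex.I_pow_four]
  have expand : φ Nz =
      (9 : ℂ) • (1 : Matrix Q4 Q4 ℂ) +
        (word4 1 pX 1 pX + word4 pX 1 pX 1 + word4 pX pX pX pX +
          word4 pZ 1 pZ 1 + word4 1 pZ 1 pZ + word4 pZ pZ pZ pZ +
          word4 pX pZ pX pZ + word4 pZ pX pZ pX + word4 pY pY pY pY) := by
    rw [Nz]
    simp only [map_add, φ_apply, word4_map, hY, smul_one_map, one_map2, ← pX_eq, ← pZ_eq]
    norm_num
  rw [← φ_apply, expand, M1, smul_add, smul_smul, smul_smul]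
  norm_num

lemma eprV_eq : eprV = (1 / 2 : ℂ) • fun q => ((e4 q : ℤ) : ℂ) := by
  funext q
  simp only [eprV, e4, Pi.smul_apply, smul_eq_mul]
  split_ifs <;> simp

lemma mulVec_cast (N : Matrix Q4 Q4 ℤ) (v : Q4 → ℤ) :
    (N.map (Int.cast : ℤ → ℂ)) *ᵥ (fun q => ((v q : ℤ) : ℂ)) =
      fun q => (((N *ᵥ v) q : ℤ) : ℂ) := by
  funext q
  simp [Matrix.mulVec, dotProduct, Matrix.map_apply]

lemma vecMulVec_mulVec' (u v w : Q4 → ℂ) :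
    Matrix.vecMulVec u v *ᵥ w = (v ⬝ᵥ w) • u := by
  funext q
  simp [Matrix.vecMulVec, Matrix.mulVec, dotProduct, Finset.mul_sum,
    Finset.sum_mul, mul_comm, mul_left_comm]

/-- Integer fact 1: `N e₄ = 18 e₄`. -/
lemma NA : Nz *ᵥ e4 = (18 : ℤ) • e4 := by decide

/-- Integer fact 2: `N` is symmetric. -/
lemma NT : Nz.transpose = Nz := by decide

/-- Integer fact 3: `(N - 10)(N - 6) = 24 · e₄ e₄ᵀ`. -/
lemma NC : (Nz - (10 : ℤ) • 1) * (Nz - (6 : ℤ) • 1) = (24 : ℤ) • Matrix.vecMulVec e4 e4 := by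
  decide

lemma hA : M1 *ᵥ eprV = eprV := by
  have h18 : ((18 : ℂ) • M1) *ᵥ (fun q => ((e4 q : ℤ) : ℂ)) =
      (18 : ℂ) • fun q => ((e4 q : ℤ) : ℂ) := by
    rw [← Nz_map, mulVec_cast, NA]
    funext q
    simp only [Pi.smul_apply, smul_eq_mul]
    push_cast
    ring
  have h1 : M1 *ᵥ (fun q => ((e4 q : ℤ) : ℂ)) = fun q => ((e4 q : ℤ) : ℂ) := by
    rw [Matrix.smul_mulVec] at h18
    exact smul_right_injective _ (by norm_num : (18 : ℂ) ≠ 0) h18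
  rw [eprV_eq, Matrix.mulVec_smul, h1]

lemma hT : M1.transpose = M1 := by
  have h : ((18 : ℂ) • M1).transpose = (18 : ℂ) • M1 := by
    rw [← Nz_map, ← Matrix.transpose_map, NT]
  rw [Matrix.transpose_smul] at h
  exact smul_right_injective _ (by norm_num : (18 : ℂ) ≠ 0) h

/-- Complex version of the quadratic identity. -/
lemma hC : ((18 : ℂ) • M1 - (10 : ℂ) • 1) * ((18 : ℂ) • M1 - (6 : ℂ) • 1) =
    (96 : ℂ) • Matrix.vecMulVec eprV eprV := by
  have h := congrArg φ NC
  rw [_root_.map_mul, map_sub, map_sub] at h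
  simp only [φ_apply, smul_one_map, Nz_map] at h
  have hrhs : ((24 : ℤ) • Matrix.vecMulVec e4 e4).map (Int.cast : ℤ → ℂ) =
      (96 : ℂ) • Matrix.vecMulVec eprV eprV := by
    ext p q
    simp only [Matrix.map_apply, Matrix.smul_apply, Matrix.vecMulVec_apply, smul_eq_mul,
      eprV_eq, Pi.smul_apply]
    push_cast
    ring
  rw [hrhs] at h
  exact h

/-- The largest eigenvalue of `M₁` is `1`, achieved uniquely (up to scalar)
by `|EPR⟩^{⊗2}`, and every other eigenvalue has absolute value at most `5/9`. -/
theorem stmt_6 :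
    M1 *ᵥ eprV = eprV ∧
      ∀ (μ : ℂ) (w : Q4 → ℂ), w ≠ 0 → M1 *ᵥ w = μ • w →
        (μ = 1 → ∃ γ : ℂ, w = γ • eprV) ∧ (μ ≠ 1 → ‖μ‖ ≤ 5 / 9) := by
  refine ⟨hA, ?_⟩
  intro μ w hw hmw
  set c : ℂ := eprV ⬝ᵥ w with hc
  have hstep : ∀ a : ℂ, ((18 : ℂ) • M1 - a • 1) *ᵥ w = ((18 : ℂ) * μ - a) • w := by
    intro a
    rw [Matrix.sub_mulVec, Matrix.smul_mulVec, hmw, Matrix.smul_mulVec,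
      Matrix.one_mulVec, smul_smul, ← sub_smul]
  have key : (((18 : ℂ) * μ - 6) * ((18 : ℂ) * μ - 10)) • w = ((96 : ℂ) * c) • eprV := by
    have h2 := congrArg (fun A => A *ᵥ w) hC
    rw [← Matrix.mulVec_mulVec, hstep 6, Matrix.mulVec_smul, hstep 10, smul_smul,
      Matrix.smul_mulVec, vecMulVec_mulVec', smul_smul, ← hc] at h2
    exact h2
  have hsym : μ * c = c := by
    have hvm : eprV ᵥ* M1 = eprV := by
      rw [← Matrix.mulVec_transpose, hT, hA]
    have h3 : eprV ⬝ᵥ (M1 *ᵥ w) = c := by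
      rw [Matrix.dotProduct_mulVec, hvm]
    rwa [hmw, dotProduct_smul, smul_eq_mul] at h3
  constructor
  · intro hμ1
    subst hμ1
    refine ⟨c, ?_⟩
    have e1 : ((18 : ℂ) * 1 - 6) * ((18 : ℂ) * 1 - 10) = 96 := by norm_num
    rw [e1] at key
    refine smul_right_injective _ (by norm_num : (96 : ℂ) ≠ 0) ?_
    show (96 : ℂ) • w = (96 : ℂ) • (c • eprV)
    rw [key, smul_smul]
  · intro hμ1
    have hc0 : c = 0 := by
      have h4 : (μ - 1) * c = 0 := by linear_combination hsym
      exact (mul_eq_zero.mp h4).resolve_left (sub_ne_zero.mpr hμ1)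
    have h0 : (((18 : ℂ) * μ - 6) * ((18 : ℂ) * μ - 10)) • w = 0 := by
      rw [key, hc0]
      simp
    have h5 : ((18 : ℂ) * μ - 6) * ((18 : ℂ) * μ - 10) = 0 :=
      (smul_eq_zero.mp h0).resolve_right hw
    rcases mul_eq_zero.mp h5 with h | h
    · have hμ : μ = 1 / 3 := by linear_combination h / 18
      rw [hμ, show ((1 : ℂ) / 3) = ((1 / 3 : ℝ) : ℂ) by norm_num, Complex.norm_real, Real.norm_eq_abs,
        abs_of_nonneg (by norm_num)]
      norm_num
    · have hμ : μ = 5 / 9 := by linear_combination h / 18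
      rw [hμ, show ((5 : ℂ) / 9) = ((5 / 9 : ℝ) : ℂ) by norm_num, Complex.norm_real, Real.norm_eq_abs,
        abs_of_nonneg (by norm_num)]
  end
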